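/- Let $(\mathcal{S},\mathcal{L},\mathcal{P})$ be a labelled Markov chain (i.e., $\mathcal{S}$ is countable and $\mathcal{P} : \mathcal{S}\times\mathcal{L}\times\mathcal{S} \to [0,1]$ satisfies $\sum_{t} \mathcal{P}(s,l,t) \le 1$ for all $s,l$). If $(R_i)_{i\in I}$ is a family of probabilistic simulations (preorders $R$ on $\mathcal{S}$ such that $s\,R\,t$ implies $\mathcal{P}(s,l,X) \le \mathcal{P}(t,l,R(X))$ for every $X\subseteq\mathcal{S}$ and label $l$, where $R(X)=\{y : \exists x\in X,\ x\,R\,y\}$), then the reflexive-transitive closure of $\bigcup_{i\in I} R_i$ is a probabilistic simulation. -/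

import Mathlib

open scoped ENNReal

/-- Probability of jumping from `s` with label `l` into the set `X`. -/
noncomputable def pSet {S L : Type*} (P : S → L → S → ℝ≥0∞) (s : S) (l : L) (X : Set S) : ℝ≥0∞ :=
  ∑' x : X, P s l x

/-- Relational image `R(X) = {y | ∃ x ∈ X, x R y}`. -/
def rimg {S : Type*} (R : S → S → Prop) (X : Set S) : Set S := {y | ∃ x ∈ X, R x y}

/-- `E` is an equivalence class of `R`. -/
def EqClass {S : Type*} (R : S → S → Prop) (E : Set S) : Prop := ∃ z, E = {y | R z y}

/-- A labelled Markov chain structure on a transition probability matrix. -/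
structure IsLMC {S L : Type*} (P : S → L → S → ℝ≥0∞) : Prop where
  le_one : ∀ s l t, P s l t ≤ 1
  sum_le_one : ∀ s l, (∑' t, P s l t) ≤ 1

/-- A probabilistic simulation: a preorder `R` such that `s R t` implies
`P(s,l,X) ≤ P(t,l,R(X))`. -/
def IsProbSim {S L : Type*} (P : S → L → S → ℝ≥0∞) (R : S → S → Prop) : Prop :=
  Reflexive R ∧ Transitive R ∧
    ∀ s t, R s t → ∀ (l : L) (X : Set S), pSet P s l X ≤ pSet P t l (rimg R X)

/-- A probabilistic bisimulation: an equivalence relation `R` such that `s R t` implies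
`P(s,l,E) = P(t,l,E)` for every `R`-equivalence class `E`. -/
def IsProbBisim {S L : Type*} (P : S → L → S → ℝ≥0∞) (R : S → S → Prop) : Prop :=
  Equivalence R ∧
    ∀ s t, R s t → ∀ (l : L) (E : Set S), EqClass R E → pSet P s l E = pSet P t l E

/-- Similarity: the union of all probabilistic simulations. -/
def LMCSimilar {S L : Type*} (P : S → L → S → ℝ≥0∞) (s t : S) : Prop :=
  ∃ R, IsProbSim P R ∧ R s t

/-- Bisimilarity: the union of all probabilistic bisimulations. -/
def Bisimilar {S L : Type*} (P : S → L → S → ℝ≥0∞) (s t : S) : Prop :=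
  ∃ R, IsProbBisim P R ∧ R s t

/-- the reflexive-transitive closure of a union of probabilistic
simulations on a labelled Markov chain is a probabilistic simulation. -/
theorem pSet_mono {S L : Type*} (P : S → L → S → ℝ≥0∞) (s : S) (l : L) {X Y : Set S}
    (h : X ⊆ Y) : pSet P s l X ≤ pSet P s l Y := by
  unfold pSet
  rw [tsum_subtype, tsum_subtype]
  exact ENNReal.tsum_le_tsum fun x => Set.indicator_le_indicator_of_subset h (fun _ => zero_le) x

theorem stmt1 {S L : Type*} [Countable S] (P : S → L → S → ℝ≥0∞) (hP : IsLMC P)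
    {I : Type*} (R : I → S → S → Prop) (hR : ∀ i, IsProbSim P (R i)) :
    IsProbSim P (Relation.ReflTransGen (fun x y => ∃ i, R i x y)) := by
  refine ⟨fun x => .refl, fun a b c => Relation.ReflTransGen.trans, ?_⟩
  intro s t hst l X
  induction hst with
  | refl =>
      exact pSet_mono P s l (fun y hy => ⟨y, hy, .refl⟩)
  | tail hab hbc ih =>
      rename_i b c
      obtain ⟨i, hi⟩ := hbc
      calc pSet P s l X ≤ pSet P b l (rimg (Relation.ReflTransGen fun x y => ∃ i, R i x y) X) := ih
        _ ≤ pSet P c l (rimg (R i) (rimg (Relation.ReflTransGen fun x y => ∃ i, R i x y) X)) :=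
            (hR i).2.2 b c hi l _
        _ ≤ pSet P c l (rimg (Relation.ReflTransGen fun x y => ∃ i, R i x y) X) := by
            apply pSet_mono
            rintro y ⟨z, ⟨x, hx, hxz⟩, hzy⟩
            exact ⟨x, hx, hxz.tail ⟨i, hzy⟩⟩
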